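/- Let F be a field closed under square roots (every element has a square root in F), V a finite-dimensional F-vector space, and Q a positive definite quadratic form on V (in the sense that Q(v) ≠ 0 for v ≠ 0, and values are squares times a common value allowing normalization). Then the special orthogonal group SO_Q(V) acts transitively on the set of lines (1-dimensional subspaces) of V. -/

import Mathlib

open QuadraticMap Module

/-- Determinant of a rank-one modification of the identity (matrix determinant lemma). -/
lemma det_id_sub_smulRight_aux {F V : Type*} [Field F] [AddCommGroup V] [Module F V]
    [FiniteDimensional F V] (f : V →ₗ[F] F) (x : V) :
    LinearMap.det (LinearMap.id - f.smulRight x) = 1 - f x := by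
  classical
  let b := Module.finBasis F V
  rw [← LinearMap.det_toMatrix b]
  have hM : LinearMap.toMatrix b b (LinearMap.id - f.smulRight x)
      = 1 - Matrix.replicateCol Unit (fun i => b.repr x i) * Matrix.replicateRow Unit (fun j => f (b j)) := by
    ext i j
    simp [LinearMap.toMatrix_apply, Matrix.one_apply, Matrix.mul_apply, Matrix.sub_apply,
      Matrix.replicateCol_apply, Matrix.replicateRow_apply, mul_comm, Finsupp.single_apply, eq_comm]
  rw [hM, Matrix.det_one_sub_mul_comm, Matrix.det_unique]
  have hx : f x = ∑ j, b.repr x j * f (b j) := by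
    conv_lhs => rw [← b.sum_repr x]
    rw [map_sum]; simp only [map_smul, smul_eq_mul]
  simp [Matrix.mul_apply, Matrix.replicateRow_apply, Matrix.replicateCol_apply, hx, mul_comm]

section Reflection

variable {F V : Type*} [Field F] [AddCommGroup V] [Module F V]
variable (Q : QuadraticForm F V) (u : V)

/-- The functional used in the reflection through `u`. -/
noncomputable def reflFun : V →ₗ[F] F := (Q u)⁻¹ • (QuadraticMap.polarBilin Q u)

lemma reflFun_apply (y : V) : reflFun Q u y = (Q u)⁻¹ * polar Q u y := rfl

lemma reflFun_self (hu : Q u ≠ 0) : reflFun Q u u = 2 := by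
  rw [reflFun_apply, polar_self, two_smul]
  field_simp
  ring

/-- The reflection through `u` as a linear map. -/
noncomputable def reflMap : V →ₗ[F] V := LinearMap.id - (reflFun Q u).smulRight u

lemma reflMap_apply (y : V) : reflMap Q u y = y - reflFun Q u y • u := rfl

lemma reflMap_invol (hu : Q u ≠ 0) (y : V) : reflMap Q u (reflMap Q u y) = y := by
  have h2 := reflFun_self Q u hu
  have h3 : reflFun Q u (y - reflFun Q u y • u)
      = reflFun Q u y - reflFun Q u y * 2 := by
    rw [_root_.map_sub, _root_.map_smul, smul_eq_mul, h2]
  rw [reflMap_apply, reflMap_apply, h3]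
  have h4 : reflFun Q u y - reflFun Q u y * 2 = -(reflFun Q u y) := by ring
  rw [h4, neg_smul, sub_neg_eq_add, sub_add_cancel]

lemma reflMap_isometry (hu : Q u ≠ 0) (y : V) : Q (reflMap Q u y) = Q y := by
  set c : F := reflFun Q u y with hc
  have key : c * Q u = polar Q y u := by
    rw [hc, reflFun_apply, polar_comm]
    field_simp
  rw [reflMap_apply, sub_eq_add_neg, ← neg_smul]
  rw [QuadraticMap.map_add (⇑Q) y ((-c) • u), QuadraticMap.map_smul, polar_smul_right]
  simp only [smul_eq_mul, neg_mul_neg, neg_mul]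
  linear_combination c * key

lemma reflMap_det [FiniteDimensional F V] (hu : Q u ≠ 0) :
    LinearMap.det (reflMap Q u) = -1 := by
  rw [reflMap, det_id_sub_smulRight_aux, reflFun_self Q u hu]
  norm_num

/-- The reflection through `u` as a linear equivalence. -/
noncomputable def reflEquiv (hu : Q u ≠ 0) : V ≃ₗ[F] V :=
  LinearEquiv.ofLinear (reflMap Q u) (reflMap Q u)
    (LinearMap.ext (reflMap_invol Q u hu)) (LinearMap.ext (reflMap_invol Q u hu))

lemma reflEquiv_apply (hu : Q u ≠ 0) (y : V) :
    reflEquiv Q u hu y = y - reflFun Q u y • u := rfl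

lemma reflEquiv_coe (hu : Q u ≠ 0) :
    (reflEquiv Q u hu : V →ₗ[F] V) = reflMap Q u := rfl

end Reflection

/-- Over a field closed under square roots, for a positive definite (anisotropic)
quadratic form `Q`, the group `SO_Q(V)` acts transitively on lines of `V`. -/
theorem stmt1 {F V : Type*} [Field F] (hsq : ∀ a : F, ∃ b : F, b * b = a)
    [AddCommGroup V] [Module F V] [FiniteDimensional F V]
    (Q : QuadraticForm F V) (hpos : ∀ v : V, v ≠ 0 → Q v ≠ 0)
    (L₁ L₂ : Submodule F V)
    (h₁ : Module.finrank F L₁ = 1) (h₂ : Module.finrank F L₂ = 1) :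
    ∃ σ : V ≃ₗ[F] V, LinearMap.det (σ : V →ₗ[F] V) = 1 ∧
      (∀ x, Q (σ x) = Q x) ∧ Submodule.map (σ : V →ₗ[F] V) L₁ = L₂ := by
  classical
  -- pick spanning vectors
  obtain ⟨v, hvL, hv0⟩ : ∃ v : V, L₁ = Submodule.span F {v} ∧ v ≠ 0 := by
    have hbot : L₁ ≠ ⊥ := by
      intro h; rw [h] at h₁; simp at h₁
    obtain ⟨v, hvmem, hv0⟩ := Submodule.exists_mem_ne_zero_of_ne_bot hbot
    refine ⟨v, ?_, hv0⟩
    have hle : Submodule.span F {v} ≤ L₁ := by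
      rw [Submodule.span_le, Set.singleton_subset_iff]; exact hvmem
    exact (Submodule.eq_of_le_of_finrank_eq hle
      (by rw [finrank_span_singleton hv0, h₁])).symm
  obtain ⟨w, hwL, hw0⟩ : ∃ w : V, L₂ = Submodule.span F {w} ∧ w ≠ 0 := by
    have hbot : L₂ ≠ ⊥ := by
      intro h; rw [h] at h₂; simp at h₂
    obtain ⟨w, hwmem, hw0⟩ := Submodule.exists_mem_ne_zero_of_ne_bot hbot
    refine ⟨w, ?_, hw0⟩
    have hle : Submodule.span F {w} ≤ L₂ := by
      rw [Submodule.span_le, Set.singleton_subset_iff]; exact hwmem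
    exact (Submodule.eq_of_le_of_finrank_eq hle
      (by rw [finrank_span_singleton hw0, h₂])).symm
  have hQv : Q v ≠ 0 := hpos v hv0
  have hQw : Q w ≠ 0 := hpos w hw0
  -- rescale v so that Q v' = Q w
  obtain ⟨b, hb⟩ := hsq (Q w / Q v)
  have hb0 : b ≠ 0 := by
    intro h; rw [h, mul_zero] at hb
    exact hQw (by field_simp at hb; simpa using hb.symm)
  set v' : V := b • v with hv'
  have hv'0 : v' ≠ 0 := smul_ne_zero hb0 hv0
  have hQv' : Q v' = Q w := by
    rw [hv', QuadraticMap.map_smul, smul_eq_mul, hb]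
    field_simp
  have hspan : Submodule.span F {v'} = L₁ := by
    rw [hvL, hv']
    exact Submodule.span_singleton_smul_eq (IsUnit.mk0 b hb0) v
  by_cases hvw : v' = w
  · refine ⟨LinearEquiv.refl F V, ?_, ?_, ?_⟩
    · simp [LinearMap.det_id]
    · intro x; rfl
    · rw [show ((LinearEquiv.refl F V : V ≃ₗ[F] V) : V →ₗ[F] V) = LinearMap.id from rfl,
        Submodule.map_id, ← hspan, hvw, hwL]
  · -- reflection through u := v' - w sends v' to w
    set u : V := v' - w with hu
    have hu0 : u ≠ 0 := sub_ne_zero.mpr hvw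
    have hQu : Q u ≠ 0 := hpos u hu0
    have hr₁v' : reflEquiv Q u hQu v' = w := by
      have hpol : polar Q u v' = Q u := by
        have h1 : polar Q u v' = 2 • Q v' - polar Q w v' := by
          rw [hu, polar_sub_left, polar_self]
        have h2 : Q u = Q v' + Q w - polar Q v' w := by
          rw [hu, sub_eq_add_neg, QuadraticMap.map_add (⇑Q) v' (-w), polar_neg_right,
            QuadraticMap.map_neg]
          ring
        rw [h1, h2, hQv', polar_comm]
        simp [two_smul]
      rw [reflEquiv_apply, reflFun_apply, hpol, inv_mul_cancel₀ hQu, one_smul, hu]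
      abel
    have hr₂w : reflEquiv Q w hQw w = -w := by
      rw [reflEquiv_apply, reflFun_self Q w hQw, two_smul]
      abel
    refine ⟨(reflEquiv Q u hQu).trans (reflEquiv Q w hQw), ?_, ?_, ?_⟩
    · have : (((reflEquiv Q u hQu).trans (reflEquiv Q w hQw)) : V →ₗ[F] V)
          = (reflMap Q w).comp (reflMap Q u) := rfl
      rw [this, LinearMap.det_comp, reflMap_det Q w hQw, reflMap_det Q u hQu]
      norm_num
    · intro x
      simp only [LinearEquiv.trans_apply]
      rw [show (reflEquiv Q w hQw) ((reflEquiv Q u hQu) x)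
          = reflMap Q w (reflMap Q u x) from rfl]
      rw [reflMap_isometry Q w hQw, reflMap_isometry Q u hQu]
    · rw [← hspan, Submodule.map_span, Set.image_singleton]
      have : (((reflEquiv Q u hQu).trans (reflEquiv Q w hQw)) : V →ₗ[F] V) v' = -w := by
        simp only [LinearEquiv.coe_coe, LinearEquiv.trans_apply, hr₁v', hr₂w]
      rw [this, hwL]
      rw [show (-w : V) = (-1 : F) • w by simp]
      exact Submodule.span_singleton_smul_eq (by norm_num : IsUnit (-1 : F)) w
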